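/- Let (a_n) and (γ_n) be sequences of nonnegative reals satisfying a_{n+1} ≤ a_n - γ_n · a_n^{1+p} for some p > 0 and all n ≥ 1. Then for all n ≥ 1, a_{n+1} ≤ a_1 / (1 + p·a_1^p·∑_{k=1}^n γ_k)^{1/p}. -/

import Mathlib

open Filter Topology

private lemma key1 (p t : ℝ) (hp : 0 < p) (ht0 : 0 ≤ t) (ht1 : t < 1) :
    (1 + p * t) * (1 - t) ^ p ≤ 1 := by
  have h1t : (0:ℝ) < 1 - t := by linarith
  have h1 : (1 - t) ^ p = Real.exp (p * Real.log (1 - t)) := by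
    rw [Real.rpow_def_of_pos h1t, mul_comm]
  have h2 : 1 + p * t ≤ Real.exp (p * t) := by
    have := Real.add_one_le_exp (p * t); linarith
  have h3 : Real.log (1 - t) ≤ -t := by
    have := Real.log_le_sub_one_of_pos h1t; linarith
  have h4 : Real.exp (p * t) * Real.exp (p * Real.log (1 - t)) ≤ 1 := by
    rw [← Real.exp_add]
    have : p * t + p * Real.log (1 - t) ≤ 0 := by nlinarith
    calc Real.exp (p * t + p * Real.log (1 - t)) ≤ Real.exp 0 := Real.exp_le_exp.mpr this
      _ = 1 := Real.exp_zero
  calc (1 + p * t) * (1 - t) ^ p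
      ≤ Real.exp (p * t) * Real.exp (p * Real.log (1 - t)) := by
        rw [h1]
        exact mul_le_mul_of_nonneg_right h2 (Real.exp_pos _).le
    _ ≤ 1 := h4

private lemma step_lem (p : ℝ) (hp : 0 < p) (x y g : ℝ) (hx : 0 < x) (hy : 0 < y)
    (hg : 0 ≤ g) (h : y ≤ x - g * x ^ (1 + p)) : 1 / x ^ p + p * g ≤ 1 / y ^ p := by
  have hxp : (0:ℝ) < x ^ p := Real.rpow_pos_of_pos hx p
  set t := g * x ^ p with ht
  have ht0 : 0 ≤ t := mul_nonneg hg hxp.le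
  have hx1p : x ^ (1 + p) = x * x ^ p := by
    rw [Real.rpow_add hx, Real.rpow_one]
  have h' : y ≤ x * (1 - t) := by rw [ht]; rw [hx1p] at h; nlinarith
  have ht1 : t < 1 := by nlinarith
  have hyineq : y ^ p ≤ x ^ p * (1 - t) ^ p := by
    rw [← Real.mul_rpow hx.le (by linarith)]
    exact Real.rpow_le_rpow hy.le h' hp.le
  have hkey := key1 p t hp ht0 ht1
  have hyppos : 0 < y ^ p := Real.rpow_pos_of_pos hy p
  have hfinal : (1 / x ^ p + p * g) * y ^ p ≤ 1 := by
    have hpos : 0 ≤ 1 / x ^ p + p * g := by positivity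
    calc (1 / x ^ p + p * g) * y ^ p
        ≤ (1 / x ^ p + p * g) * (x ^ p * (1 - t) ^ p) :=
          mul_le_mul_of_nonneg_left hyineq hpos
      _ = (1 + p * t) * (1 - t) ^ p := by
          rw [ht]; field_simp
      _ ≤ 1 := hkey
  calc 1 / x ^ p + p * g = ((1 / x ^ p + p * g) * y ^ p) / y ^ p := by
        field_simp
    _ ≤ 1 / y ^ p := by gcongr

/-- Polyak's lemma on numerical sequences. -/
theorem stmt_1 (a γ : ℕ → ℝ) (p : ℝ) (hp : 0 < p)
    (ha : ∀ n, 0 ≤ a n) (hγ : ∀ n, 0 ≤ γ n)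
    (hrec : ∀ n ≥ 1, a (n + 1) ≤ a n - γ n * a n ^ (1 + p)) :
    ∀ n ≥ 1, a (n + 1) ≤ a 1 / (1 + p * a 1 ^ p * ∑ k ∈ Finset.Icc 1 n, γ k) ^ (1 / p) := by
  intro n hn
  by_cases h1 : a 1 = 0
  · -- all terms are zero
    have hz : ∀ m, 1 ≤ m → a m = 0 := by
      intro m hm
      induction m with
      | zero => omega
      | succ k ih =>
        rcases Nat.lt_or_ge k 1 with hk | hk
        · interval_cases k
          exact h1
        · have hk0 := ih hk
          have := hrec k hk
          rw [hk0] at this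
          have h0p : (0:ℝ) ^ (1 + p) = 0 := Real.zero_rpow (by positivity)
          rw [h0p] at this
          have := ha (k + 1)
          linarith
    rw [h1, zero_div]
    rw [hz (n + 1) (by omega)]
  · have ha1 : 0 < a 1 := lt_of_le_of_ne (ha 1) (Ne.symm h1)
    have ha1p : (0:ℝ) < a 1 ^ p := Real.rpow_pos_of_pos ha1 p
    have hSnn : ∀ m, (0:ℝ) ≤ ∑ k ∈ Finset.Icc 1 m, γ k := fun m =>
      Finset.sum_nonneg fun k _ => hγ k
    have main : ∀ m, 1 ≤ m →
        a (m + 1) ^ p * (1 + p * a 1 ^ p * ∑ k ∈ Finset.Icc 1 m, γ k) ≤ a 1 ^ p := by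
      intro m hm
      induction m, hm using Nat.le_induction with
      | base =>
        simp only [Finset.Icc_self, Finset.sum_singleton]
        rcases le_or_gt (a 2) 0 with h2 | h2
        · have h20 : a 2 = 0 := le_antisymm h2 (ha 2)
          rw [h20, Real.zero_rpow hp.ne', zero_mul]
          exact ha1p.le
        · have hs := step_lem p hp (a 1) (a 2) (γ 1) ha1 h2 (hγ 1) (hrec 1 le_rfl)
          have h2p : (0:ℝ) < a 2 ^ p := Real.rpow_pos_of_pos h2 p
          have hdiv : (1 + p * a 1 ^ p * γ 1) / a 1 ^ p ≤ 1 / a 2 ^ p := by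
            have : (1 + p * a 1 ^ p * γ 1) / a 1 ^ p = 1 / a 1 ^ p + p * γ 1 := by
              field_simp
            rw [this]; exact hs
          rw [div_le_div_iff₀ ha1p h2p] at hdiv
          nlinarith
      | succ m hm ih =>
        rw [Finset.sum_Icc_succ_top (by omega : 1 ≤ m + 1)]
        set D : ℝ := 1 + p * a 1 ^ p * ∑ k ∈ Finset.Icc 1 m, γ k with hD
        have hDpos : 0 < D := by
          have h0 : 0 ≤ p * a 1 ^ p * ∑ k ∈ Finset.Icc 1 m, γ k :=
            mul_nonneg (mul_nonneg hp.le ha1p.le) (hSnn m)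
          rw [hD]; linarith
        rcases le_or_gt (a (m + 2)) 0 with h2 | h2
        · have h20 : a (m + 2) = 0 := le_antisymm h2 (ha (m + 2))
          rw [h20, Real.zero_rpow hp.ne', zero_mul]
          exact ha1p.le
        · -- a (m+1) > 0 since a(m+2) > 0
          have hx : 0 < a (m + 1) := by
            by_contra hc
            push_neg at hc
            have hx0 : a (m + 1) = 0 := le_antisymm hc (ha (m + 1))
            have := hrec (m + 1) (by omega)
            rw [hx0, Real.zero_rpow (by positivity : (1:ℝ) + p ≠ 0)] at this
            simp at this
            linarith
          have hxp : (0:ℝ) < a (m + 1) ^ p := Real.rpow_pos_of_pos hx p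
          have hyp : (0:ℝ) < a (m + 2) ^ p := Real.rpow_pos_of_pos h2 p
          have hs := step_lem p hp (a (m + 1)) (a (m + 2)) (γ (m + 1)) hx h2
            (hγ (m + 1)) (hrec (m + 1) (by omega))
          -- from ih : a(m+1)^p * D ≤ a1^p, get D / a1^p ≤ 1 / a(m+1)^p
          have hdiv1 : D / a 1 ^ p ≤ 1 / a (m + 1) ^ p := by
            rw [div_le_div_iff₀ ha1p hxp]
            nlinarith
          have hdiv2 : (D + p * a 1 ^ p * γ (m + 1)) / a 1 ^ p ≤ 1 / a (m + 2) ^ p := by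
            have heq : (D + p * a 1 ^ p * γ (m + 1)) / a 1 ^ p
                = D / a 1 ^ p + p * γ (m + 1) := by
              field_simp
            rw [heq]
            calc D / a 1 ^ p + p * γ (m + 1)
                ≤ 1 / a (m + 1) ^ p + p * γ (m + 1) := by linarith
              _ ≤ 1 / a (m + 2) ^ p := hs
          rw [div_le_div_iff₀ ha1p hyp] at hdiv2
          have hgoal : a (m + 2) ^ p * (D + p * a 1 ^ p * γ (m + 1)) ≤ a 1 ^ p := by
            nlinarith
          convert hgoal using 2
          ring
    -- conclude
    set D : ℝ := 1 + p * a 1 ^ p * ∑ k ∈ Finset.Icc 1 n, γ k with hD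
    have hDpos : 0 < D := by
      have h0 : 0 ≤ p * a 1 ^ p * ∑ k ∈ Finset.Icc 1 n, γ k :=
        mul_nonneg (mul_nonneg hp.le ha1p.le) (hSnn n)
      rw [hD]; linarith
    have h2 : a (n + 1) ^ p ≤ a 1 ^ p / D := (le_div_iff₀ hDpos).mpr (main n hn)
    have h3 := Real.rpow_le_rpow (Real.rpow_nonneg (ha (n + 1)) p) h2
      (one_div_nonneg.mpr hp.le)
    rwa [← Real.rpow_mul (ha (n + 1)), mul_one_div_cancel hp.ne', Real.rpow_one,
      Real.div_rpow (Real.rpow_nonneg (ha 1) p) hDpos.le,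
      ← Real.rpow_mul (ha 1), mul_one_div_cancel hp.ne', Real.rpow_one] at h3
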